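/- For every real number λ, every integer k ≥ 1 and every real number x ≥ 0, one has φ_{k,λ}(x) = e^{−x} Σ_{n=1}^{∞} (x^n/(n−1)!) (n−λ)_{k−1,λ}, where the series on the right converges. (This is the second equality of (36).) -/

import Mathlib

open Finset

/-- Generalized falling factorial `(x)_{n,λ} = x(x-λ)⋯(x-(n-1)λ)`. -/
noncomputable def dfall (lam x : ℝ) (n : ℕ) : ℝ := ∏ i ∈ Finset.range n, (x - i * lam)

/-- Ordinary falling factorial `(x)_n = x(x-1)⋯(x-n+1)`. -/
noncomputable def ffall (x : ℝ) (n : ℕ) : ℝ := ∏ i ∈ Finset.range n, (x - i)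

/-- Degenerate Stirling numbers of the second kind, defined by the recurrence
`S_{2,λ}(0,0)=1`, `S_{2,λ}(n,k)=0` for `k>n` (and `k<0`), and
`S_{2,λ}(n+1,k) = S_{2,λ}(n,k-1) + (k-nλ) S_{2,λ}(n,k)`. -/
noncomputable def dStir (lam : ℝ) : ℕ → ℕ → ℝ
  | 0, 0 => 1
  | 0, _ + 1 => 0
  | n + 1, 0 => ((0 : ℝ) - n * lam) * dStir lam n 0
  | n + 1, k + 1 => dStir lam n k + (((k : ℝ) + 1) - n * lam) * dStir lam n (k + 1)

/-- Degenerate Bell polynomials `φ_{n,λ}(x) = Σ_{k=0}^n S_{2,λ}(n,k) x^k`. -/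
noncomputable def dBell (lam x : ℝ) (n : ℕ) : ℝ :=
  ∑ k ∈ Finset.range (n + 1), dStir lam n k * x ^ k
lemma dStir_zero_of_lt (lam : ℝ) : ∀ n j, n < j → dStir lam n j = 0 := by
  intro n
  induction n with
  | zero =>
    intro j hj
    match j, hj with
    | m + 1, _ => rfl
  | succ n ih =>
    intro j hj
    match j, hj with
    | m + 1, hj =>
      have h1 : dStir lam n m = 0 := ih m (by omega)
      have h2 : dStir lam n (m + 1) = 0 := ih (m + 1) (by omega)
      show dStir lam n m + (((m : ℝ) + 1) - n * lam) * dStir lam n (m + 1) = 0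
      rw [h1, h2]; ring

lemma ffall_succ' (y : ℝ) (j : ℕ) : ffall y (j + 1) = ffall (y - 1) j * y := by
  unfold ffall
  rw [Finset.prod_range_succ']
  simp only [Nat.cast_zero, sub_zero, Nat.cast_add, Nat.cast_one]
  congr 1
  apply Finset.prod_congr rfl
  intro i _
  push_cast
  ring

lemma dfall_succ' (lam y : ℝ) (j : ℕ) : dfall lam y (j + 1) = dfall lam (y - lam) j * y := by
  unfold dfall
  rw [Finset.prod_range_succ']
  simp only [Nat.cast_zero, zero_mul, sub_zero]
  congr 1
  apply Finset.prod_congr rfl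
  intro i _
  push_cast
  ring

lemma ffall_mul_ffall (y : ℝ) (j : ℕ) : y * ffall y j = ffall y (j + 1) + j * ffall y j := by
  unfold ffall
  rw [Finset.prod_range_succ]
  ring

lemma dfall_eq_sum (lam x : ℝ) : ∀ k, dfall lam x k
    = ∑ j ∈ Finset.range (k + 1), dStir lam k j * ffall x j := by
  intro k
  induction k with
  | zero => simp [dfall, dStir, ffall]
  | succ k ih =>
    have hstep : dfall lam x (k + 1) = (x - k * lam) * dfall lam x k := by
      unfold dfall; rw [Finset.prod_range_succ]; ring
    rw [hstep, ih, Finset.mul_sum]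
    have hterm : ∀ j, (x - k * lam) * (dStir lam k j * ffall x j)
        = dStir lam k j * ffall x (j + 1) + ((j : ℝ) - k * lam) * dStir lam k j * ffall x j := by
      intro j
      linear_combination dStir lam k j * ffall_mul_ffall x j
    simp only [hterm]
    rw [Finset.sum_add_distrib]
    -- RHS: split using sum_range_succ' on range (k+2)
    rw [Finset.sum_range_succ' (fun j => dStir lam (k + 1) j * ffall x j) (k + 1)]
    have hrec : ∀ j : ℕ, dStir lam (k + 1) (j + 1)
        = dStir lam k j + (((j : ℝ) + 1) - k * lam) * dStir lam k (j + 1) := fun j => rfl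
    have h0 : dStir lam (k + 1) 0 = ((0:ℝ) - k * lam) * dStir lam k 0 := rfl
    simp only [hrec, h0, add_mul]
    rw [Finset.sum_add_distrib]
    have hff0 : ffall x 0 = 1 := by simp [ffall]
    -- second sums match after reindexing
    have e2 : ∑ j ∈ Finset.range (k + 1), ((j : ℝ) - k * lam) * dStir lam k j * ffall x j
        = (∑ j ∈ Finset.range (k + 1),
            (((j : ℝ) + 1) - k * lam) * dStir lam k (j + 1) * ffall x (j + 1))
          + ((0:ℝ) - k * lam) * dStir lam k 0 * ffall x 0 := by
      have := Finset.sum_range_succ'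
        (fun j => ((j : ℝ) - k * lam) * dStir lam k j * ffall x j) k
      -- this : ∑ j ∈ range (k+1), f j = ∑ j ∈ range k, f (j+1) + f 0
      rw [this]
      congr 1
      · -- need range k vs range (k+1): top term vanishes since dStir lam k (k+1) = 0
        rw [Finset.sum_range_succ (fun j => (((j:ℝ)+1) - k*lam) * dStir lam k (j+1) * ffall x (j+1)) k]
        rw [dStir_zero_of_lt lam k (k+1) (by omega)]
        push_cast
        ring
      · push_cast; ring
    rw [e2]
    push_cast
    ring

lemma ffall_cast (x : ℝ) (j n : ℕ) :
    ffall ((n + j : ℕ) : ℝ) j * (n.factorial : ℝ) = ((n + j).factorial : ℝ) := by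
  induction j with
  | zero => simp [ffall]
  | succ j ih =>
    have hc : ((n + (j + 1) : ℕ) : ℝ) - 1 = ((n + j : ℕ) : ℝ) := by push_cast; ring
    rw [ffall_succ', hc, show n + (j + 1) = (n + j) + 1 from rfl, Nat.factorial_succ]
    push_cast
    push_cast at ih
    linear_combination ((n : ℝ) + j + 1) * ih

lemma summable_ffall (x : ℝ) (j : ℕ) :
    Summable (fun n : ℕ => ffall (n : ℝ) j * (x ^ n / n.factorial)) := by
  rw [← summable_nat_add_iff j]
  have heq : (fun n : ℕ => ffall ((n + j : ℕ) : ℝ) j * (x ^ (n + j) / ((n + j).factorial : ℝ)))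
      = fun n : ℕ => x ^ j * (x ^ n / n.factorial) := by
    funext n
    have hf := ffall_cast x j n
    have h1 : ((n.factorial : ℕ) : ℝ) ≠ 0 := Nat.cast_ne_zero.mpr n.factorial_ne_zero
    have h2 : (((n + j).factorial : ℕ) : ℝ) ≠ 0 := Nat.cast_ne_zero.mpr (n + j).factorial_ne_zero
    push_cast at hf
    field_simp
    rw [pow_add]
    linear_combination (norm := (push_cast; ring)) x ^ n * x ^ j * hf
  simp only [Nat.cast_add] at heq ⊢
  rw [heq]
  exact (Real.summable_pow_div_factorial x).mul_left _

lemma tsum_ffall (x : ℝ) (j : ℕ) :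
    ∑' n : ℕ, ffall (n : ℝ) j * (x ^ n / n.factorial) = x ^ j * Real.exp x := by
  have hs := summable_ffall x j
  have key := hs.sum_add_tsum_nat_add j
  have hzero : ∑ i ∈ Finset.range j, ffall (i : ℝ) j * (x ^ i / i.factorial) = 0 := by
    apply Finset.sum_eq_zero
    intro i hi
    have : ffall (i : ℝ) j = 0 :=
      Finset.prod_eq_zero hi (by simp)
    rw [this, zero_mul]
  rw [← key, hzero, zero_add]
  have heq : ∀ n : ℕ, ffall ((n + j : ℕ) : ℝ) j * (x ^ (n + j) / ((n + j).factorial : ℝ))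
      = x ^ j * (x ^ n / n.factorial) := by
    intro n
    have hf := ffall_cast x j n
    have h1 : ((n.factorial : ℕ) : ℝ) ≠ 0 := Nat.cast_ne_zero.mpr n.factorial_ne_zero
    have h2 : (((n + j).factorial : ℕ) : ℝ) ≠ 0 := Nat.cast_ne_zero.mpr (n + j).factorial_ne_zero
    push_cast at hf
    field_simp
    rw [pow_add]
    linear_combination (norm := (push_cast; ring)) x ^ n * x ^ j * hf
  have : ∑' n : ℕ, ffall ((n + j : ℕ) : ℝ) j * (x ^ (n + j) / ((n + j).factorial : ℝ))
      = ∑' n : ℕ, x ^ j * (x ^ n / n.factorial) := tsum_congr heq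
  push_cast at this ⊢
  rw [this, tsum_mul_left]
  congr 1
  rw [Real.exp_eq_exp_ℝ, NormedSpace.exp_eq_tsum_div]

lemma dfall_mul_eq (lam x : ℝ) (k : ℕ) (n : ℕ) :
    x ^ n / n.factorial * dfall lam (n : ℝ) k
      = ∑ j ∈ Finset.range (k + 1), dStir lam k j * (ffall (n : ℝ) j * (x ^ n / n.factorial)) := by
  rw [dfall_eq_sum, Finset.mul_sum]
  apply Finset.sum_congr rfl
  intro j _
  ring

lemma summable_dfall (lam x : ℝ) (k : ℕ) :
    Summable (fun n : ℕ => x ^ n / n.factorial * dfall lam (n : ℝ) k) := by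
  have : (fun n : ℕ => x ^ n / n.factorial * dfall lam (n : ℝ) k)
      = fun n : ℕ => ∑ j ∈ Finset.range (k + 1),
          dStir lam k j * (ffall (n : ℝ) j * (x ^ n / n.factorial)) := funext (dfall_mul_eq lam x k)
  rw [this]
  exact summable_sum fun j _ => (summable_ffall x j).mul_left _

lemma tsum_dfall (lam x : ℝ) (k : ℕ) :
    ∑' n : ℕ, x ^ n / n.factorial * dfall lam (n : ℝ) k = Real.exp x * dBell lam x k := by
  calc ∑' n : ℕ, x ^ n / n.factorial * dfall lam (n : ℝ) k
      = ∑' n : ℕ, ∑ j ∈ Finset.range (k + 1),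
          dStir lam k j * (ffall (n : ℝ) j * (x ^ n / n.factorial)) :=
        tsum_congr (dfall_mul_eq lam x k)
    _ = ∑ j ∈ Finset.range (k + 1),
          ∑' n : ℕ, dStir lam k j * (ffall (n : ℝ) j * (x ^ n / n.factorial)) :=
        Summable.tsum_finsetSum fun j _ => (summable_ffall x j).mul_left _
    _ = ∑ j ∈ Finset.range (k + 1), dStir lam k j * (x ^ j * Real.exp x) := by
        apply Finset.sum_congr rfl
        intro j _
        rw [tsum_mul_left, tsum_ffall]
    _ = Real.exp x * dBell lam x k := by
        rw [dBell, Finset.mul_sum]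
        apply Finset.sum_congr rfl
        intro j _
        ring

/-- for `λ ∈ ℝ`, `k ≥ 1` and real `x ≥ 0`, the series
`Σ_{n=1}^{∞} (x^n/(n−1)!) (n−λ)_{k−1,λ}` converges (here re-indexed by `n ↦ n+1` so as to
run over all of `ℕ`), and `φ_{k,λ}(x) = e^{−x} Σ_{n=1}^{∞} (x^n/(n−1)!) (n−λ)_{k−1,λ}`. -/
theorem dBell_dobinski' (lam : ℝ) (k : ℕ) (hk : 1 ≤ k) (x : ℝ) (hx : 0 ≤ x) :
    Summable (fun n : ℕ => x ^ (n + 1) / n.factorial * dfall lam ((n : ℝ) + 1 - lam) (k - 1))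
      ∧ dBell lam x k
          = Real.exp (-x)
              * ∑' n : ℕ, x ^ (n + 1) / n.factorial * dfall lam ((n : ℝ) + 1 - lam) (k - 1) := by
  obtain ⟨m, rfl⟩ : ∃ m, k = m + 1 := ⟨k - 1, by omega⟩
  simp only [Nat.add_sub_cancel]
  set F : ℕ → ℝ := fun n => x ^ n / n.factorial * dfall lam (n : ℝ) (m + 1) with hF
  have hFsum : Summable F := summable_dfall lam x (m + 1)
  have hshift : ∀ n : ℕ, F (n + 1)
      = x ^ (n + 1) / n.factorial * dfall lam ((n : ℝ) + 1 - lam) m := by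
    intro n
    have h1 : ((n : ℝ) + 1) ≠ 0 := by positivity
    have h2 : ((n.factorial : ℕ) : ℝ) ≠ 0 := Nat.cast_ne_zero.mpr n.factorial_ne_zero
    rw [hF]
    simp only [Nat.cast_add, Nat.cast_one]
    rw [dfall_succ' lam ((n : ℝ) + 1) m, Nat.factorial_succ]
    push_cast
    field_simp
  have hF0 : F 0 = 0 := by
    have h0 : dfall lam (0 : ℝ) (m + 1) = 0 := by
      rw [dfall_succ']
      simp
    simp [hF, h0]
  have hgsum : Summable (fun n : ℕ =>
      x ^ (n + 1) / n.factorial * dfall lam ((n : ℝ) + 1 - lam) m) := by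
    have := (summable_nat_add_iff 1).mpr hFsum
    exact this.congr hshift
  refine ⟨hgsum, ?_⟩
  have htail : ∑' n : ℕ, x ^ (n + 1) / n.factorial * dfall lam ((n : ℝ) + 1 - lam) m
      = ∑' n : ℕ, F (n + 1) := tsum_congr fun n => (hshift n).symm
  have hzero_add := Summable.tsum_eq_zero_add hFsum
  rw [hF0, zero_add] at hzero_add
  rw [htail, ← hzero_add, hF, tsum_dfall, ← mul_assoc, ← Real.exp_add, neg_add_cancel,
    Real.exp_zero, one_mul]
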